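/- Let p ≥ 1, A_i ∈ ℝ^{m×n_i}, r_i > 0, s_i > 0, and let Q_i ∈ ℝ^{n_i×n_i} be symmetric matrices with Q_i − r_i A_iᵀA_i positive semidefinite for i = 1, …, p. Then the block matrix H with (i,i) blocks Q_i + s_i I_{n_i}, (i, p+1) blocks −A_iᵀ, (p+1, i) blocks −A_i, and (p+1, p+1) block (∑_{j=1}^p 1/r_j) I_m is symmetric positive definite; more precisely, for every w = (x_1, …, x_p, λ) ≠ 0, ⟨w, Hw⟩ ≥ ∑_{i=1}^p ‖√r_i · A_i x_i − (1/√r_i) · λ‖² + ∑_{i=1}^p s_i ‖x_i‖² > 0. -/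

import Mathlib

open Matrix Finset

/-- With `rᵢ, sᵢ > 0` and `Qᵢ` symmetric with `Qᵢ − rᵢAᵢᵀAᵢ` positive
semidefinite, the quadratic form of the block matrix `H` (diagonal blocks `Qᵢ + sᵢI`,
off-diagonal blocks `−Aᵢᵀ`/`−Aᵢ`, lower-right block `(∑ⱼ 1/rⱼ)I_m`) satisfies
`⟨w, Hw⟩ ≥ ∑ᵢ ‖√rᵢ·Aᵢxᵢ − (1/√rᵢ)·λ‖² + ∑ᵢ sᵢ‖xᵢ‖² > 0` for every `w ≠ 0`; in particular
`H` is symmetric positive definite. -/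
theorem stmt_16 (p m : ℕ) (hp : 1 ≤ p) (nd : Fin p → ℕ)
    (A : ∀ i : Fin p, Matrix (Fin m) (Fin (nd i)) ℝ)
    (r : Fin p → ℝ) (hr : ∀ i, 0 < r i) (s : Fin p → ℝ) (hs : ∀ i, 0 < s i)
    (Q : ∀ i : Fin p, Matrix (Fin (nd i)) (Fin (nd i)) ℝ)
    (hQsymm : ∀ i, (Q i).IsHermitian)
    (hQpsd : ∀ i, (Q i - r i • ((A i)ᵀ * A i)).PosSemidef) :
    ∀ (x : ∀ i : Fin p, Fin (nd i) → ℝ) (lam : Fin m → ℝ), (x, lam) ≠ 0 →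
      ((∑ i, x i ⬝ᵥ ((Q i + s i • (1 : Matrix (Fin (nd i)) (Fin (nd i)) ℝ)) *ᵥ x i))
          - 2 * (∑ i, lam ⬝ᵥ (A i *ᵥ x i)) + (∑ j, 1 / r j) * (lam ⬝ᵥ lam) ≥
        (∑ i, (Real.sqrt (r i) • (A i *ᵥ x i) - (1 / Real.sqrt (r i)) • lam) ⬝ᵥ
            (Real.sqrt (r i) • (A i *ᵥ x i) - (1 / Real.sqrt (r i)) • lam))
          + ∑ i, s i * (x i ⬝ᵥ x i)) ∧
      (0 < (∑ i, x i ⬝ᵥ ((Q i + s i • (1 : Matrix (Fin (nd i)) (Fin (nd i)) ℝ)) *ᵥ x i))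
          - 2 * (∑ i, lam ⬝ᵥ (A i *ᵥ x i)) + (∑ j, 1 / r j) * (lam ⬝ᵥ lam)) := by
  intro x lam hne
  set v : ∀ i : Fin p, Fin m → ℝ := fun i => A i *ᵥ x i with hv
  -- expansion of each square term
  have expand : ∀ i : Fin p,
      (Real.sqrt (r i) • v i - (1 / Real.sqrt (r i)) • lam) ⬝ᵥ
        (Real.sqrt (r i) • v i - (1 / Real.sqrt (r i)) • lam)
      = r i * (v i ⬝ᵥ v i) - 2 * (lam ⬝ᵥ v i) + (1 / r i) * (lam ⬝ᵥ lam) := by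
    intro i
    have hsq : Real.sqrt (r i) * Real.sqrt (r i) = r i := Real.mul_self_sqrt (hr i).le
    have hrne : r i ≠ 0 := (hr i).ne'
    have hsqne : Real.sqrt (r i) ≠ 0 := Real.sqrt_ne_zero'.mpr (hr i)
    rw [dotProduct_sub, sub_dotProduct, sub_dotProduct, smul_dotProduct, smul_dotProduct,
      smul_dotProduct, smul_dotProduct, dotProduct_smul, dotProduct_smul, dotProduct_smul,
      dotProduct_smul, dotProduct_comm (v i) lam]
    simp only [smul_eq_mul]
    field_simp
    rw [Real.sq_sqrt (hr i).le]
    ring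
  have hexp2 : ∀ i : Fin p,
      x i ⬝ᵥ ((Q i + s i • (1 : Matrix (Fin (nd i)) (Fin (nd i)) ℝ)) *ᵥ x i)
      = x i ⬝ᵥ (Q i *ᵥ x i) + s i * (x i ⬝ᵥ x i) := by
    intro i
    rw [add_mulVec, dotProduct_add, smul_mulVec, one_mulVec, dotProduct_smul,
      smul_eq_mul]
  have key : ∀ i : Fin p, r i * (v i ⬝ᵥ v i) ≤ x i ⬝ᵥ (Q i *ᵥ x i) := by
    intro i
    have h := (hQpsd i).dotProduct_mulVec_nonneg (x i)
    have hAx : x i ⬝ᵥ (((A i)ᵀ * A i) *ᵥ x i) = v i ⬝ᵥ v i := by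
      rw [← mulVec_mulVec, dotProduct_mulVec, vecMul_transpose]
    simpa [sub_mulVec, dotProduct_sub, smul_mulVec, dotProduct_smul, hAx,
      sub_nonneg] using h
  have sumineq :
      (∑ i, x i ⬝ᵥ ((Q i + s i • (1 : Matrix (Fin (nd i)) (Fin (nd i)) ℝ)) *ᵥ x i))
          - 2 * (∑ i, lam ⬝ᵥ (A i *ᵥ x i)) + (∑ j, 1 / r j) * (lam ⬝ᵥ lam) ≥
        (∑ i, (Real.sqrt (r i) • (A i *ᵥ x i) - (1 / Real.sqrt (r i)) • lam) ⬝ᵥ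
            (Real.sqrt (r i) • (A i *ᵥ x i) - (1 / Real.sqrt (r i)) • lam))
          + ∑ i, s i * (x i ⬝ᵥ x i) := by
    have h1 : (∑ i, (Real.sqrt (r i) • (A i *ᵥ x i) - (1 / Real.sqrt (r i)) • lam) ⬝ᵥ
            (Real.sqrt (r i) • (A i *ᵥ x i) - (1 / Real.sqrt (r i)) • lam))
        = ∑ i, (r i * (v i ⬝ᵥ v i) - 2 * (lam ⬝ᵥ v i) + (1 / r i) * (lam ⬝ᵥ lam)) := by
      exact Finset.sum_congr rfl fun i _ => expand i
    have h2 : (∑ i, x i ⬝ᵥ ((Q i + s i • (1 : Matrix (Fin (nd i)) (Fin (nd i)) ℝ)) *ᵥ x i))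
        = ∑ i, (x i ⬝ᵥ (Q i *ᵥ x i) + s i * (x i ⬝ᵥ x i)) :=
      Finset.sum_congr rfl fun i _ => hexp2 i
    rw [h1, h2, Finset.sum_add_distrib, Finset.sum_add_distrib, Finset.sum_sub_distrib,
      ← Finset.sum_mul]
    have h3 : ∑ i, r i * (v i ⬝ᵥ v i) ≤ ∑ i, x i ⬝ᵥ (Q i *ᵥ x i) :=
      Finset.sum_le_sum fun i _ => key i
    have h4 : ∑ i, 2 * (lam ⬝ᵥ v i) = 2 * ∑ i, lam ⬝ᵥ (A i *ᵥ x i) := by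
      rw [← Finset.mul_sum]
    simp only [hv] at h3 h4 ⊢
    linarith
  refine ⟨sumineq, lt_of_lt_of_le ?_ sumineq⟩
  -- positivity of the RHS
  have hterm_nonneg : ∀ i : Fin p, 0 ≤ (Real.sqrt (r i) • (A i *ᵥ x i) - (1 / Real.sqrt (r i)) • lam) ⬝ᵥ
      (Real.sqrt (r i) • (A i *ᵥ x i) - (1 / Real.sqrt (r i)) • lam) := fun i =>
    Finset.sum_nonneg fun j _ => mul_self_nonneg _
  have hs_nonneg : ∀ i : Fin p, 0 ≤ s i * (x i ⬝ᵥ x i) := fun i =>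
    mul_nonneg (hs i).le (Finset.sum_nonneg fun j _ => mul_self_nonneg _)
  by_cases hx : x = 0
  · -- lam ≠ 0
    have hlam : lam ≠ 0 := by
      intro h; exact hne (by simp [hx, h, Prod.ext_iff])
    obtain ⟨i0⟩ : Nonempty (Fin p) := ⟨⟨0, hp⟩⟩
    have hpos : 0 < (Real.sqrt (r i0) • (A i0 *ᵥ x i0) - (1 / Real.sqrt (r i0)) • lam) ⬝ᵥ
        (Real.sqrt (r i0) • (A i0 *ᵥ x i0) - (1 / Real.sqrt (r i0)) • lam) := by
      have hw : (Real.sqrt (r i0) • (A i0 *ᵥ x i0) - (1 / Real.sqrt (r i0)) • lam) ≠ 0 := by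
        have hx0 : x i0 = 0 := by rw [hx]; rfl
        simp only [hx0, mulVec_zero, smul_zero, zero_sub, neg_ne_zero]
        intro h
        apply hlam
        have hsqne : (1 : ℝ) / Real.sqrt (r i0) ≠ 0 := one_div_ne_zero (Real.sqrt_ne_zero'.mpr (hr i0))
        exact (smul_eq_zero.mp h).resolve_left hsqne
      have := dotProduct_star_self_pos_iff (v := Real.sqrt (r i0) • (A i0 *ᵥ x i0) - (1 / Real.sqrt (r i0)) • lam) |>.mpr hw
      simpa using this
    calc (0:ℝ) < (Real.sqrt (r i0) • (A i0 *ᵥ x i0) - (1 / Real.sqrt (r i0)) • lam) ⬝ᵥ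
        (Real.sqrt (r i0) • (A i0 *ᵥ x i0) - (1 / Real.sqrt (r i0)) • lam) := hpos
      _ ≤ ∑ i, (Real.sqrt (r i) • (A i *ᵥ x i) - (1 / Real.sqrt (r i)) • lam) ⬝ᵥ
            (Real.sqrt (r i) • (A i *ᵥ x i) - (1 / Real.sqrt (r i)) • lam) :=
        Finset.single_le_sum (fun i _ => hterm_nonneg i) (Finset.mem_univ i0)
      _ ≤ _ := le_add_of_nonneg_right (Finset.sum_nonneg fun i _ => hs_nonneg i)
  · obtain ⟨i0, hi0⟩ : ∃ i, x i ≠ 0 := by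
      by_contra h; push_neg at h; exact hx (funext h)
    have hpos : 0 < s i0 * (x i0 ⬝ᵥ x i0) := by
      refine mul_pos (hs i0) ?_
      have := dotProduct_star_self_pos_iff (v := x i0) |>.mpr hi0
      simpa using this
    calc (0:ℝ) < s i0 * (x i0 ⬝ᵥ x i0) := hpos
      _ ≤ ∑ i, s i * (x i ⬝ᵥ x i) :=
        Finset.single_le_sum (fun i _ => hs_nonneg i) (Finset.mem_univ i0)
      _ ≤ _ := le_add_of_nonneg_left (Finset.sum_nonneg fun i _ => hterm_nonneg i)
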